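/- Define f : ℂ³ → ℂ by f(u, v, w) = 64u³ − 12u·(3 + 2(v² − w²)) − 14(v² + w²) − (v⁴ − w⁴), and for j = 1, 2, 3 and h ∈ ℝ set Z_j(h) = cos((2h + 2π(j−1))/3) + (i/2)·sin(2·(2h + 2π(j−1))/3). Then {(u, v) ∈ ℂ² : |v| = 1 and f(u, v, conj(v)) = 0} = {(Z_j(h), e^{ih}) : j ∈ {1, 2, 3}, h ∈ ℝ}; i.e. the zero set of the figure-8 semiholomorphic polynomial on ℂ × S¹ is exactly the parametrized braid whose closure is the figure-8 knot. -/

import Mathlib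

open Complex Real

/-- The paper's figure-8 semiholomorphic polynomial
`f(u,v,w) = 64u³ − 12u(3 + 2(v² − w²)) − 14(v² + w²) − (v⁴ − w⁴)`. -/
def fFig8 (u v w : ℂ) : ℂ :=
  64 * u ^ 3 - 12 * u * (3 + 2 * (v ^ 2 - w ^ 2)) - 14 * (v ^ 2 + w ^ 2) - (v ^ 4 - w ^ 4)

/-- The figure-8 braid strand parametrization (`s = 3`, `ℓ = 2`, `r = 2`, `a = b = 1`):
`Z_j(h) = cos((2h + 2π(j−1))/3) + (i/2)·sin(2·(2h + 2π(j−1))/3)`. -/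
noncomputable def Zfig8 (j : ℕ) (h : ℝ) : ℂ :=
  ((Real.cos ((2 * h + 2 * Real.pi * ((j : ℝ) - 1)) / 3) : ℝ) : ℂ) +
    Complex.I / 2 * ((Real.sin (2 * (2 * h + 2 * Real.pi * ((j : ℝ) - 1)) / 3) : ℝ) : ℂ)

lemma keyFig8 (u z y W : ℂ) (hzy : z * y = 1) (hW : W ^ 2 + W + 1 = 0) :
    64 * u ^ 3 - 12 * u * (3 + 2 * (z ^ 3 - y ^ 3)) - 14 * (z ^ 3 + y ^ 3) - (z ^ 6 - y ^ 6) =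
      64 * (u - ((z + y) / 2 + (z ^ 2 - y ^ 2) / 4)) *
        (u - ((z * W + y * W ^ 2) / 2 + ((z * W) ^ 2 - (y * W ^ 2) ^ 2) / 4)) *
        (u - ((z * W ^ 2 + y * W) / 2 + ((z * W ^ 2) ^ 2 - (y * W) ^ 2) / 4)) := by
  linear_combination ((8)*y*W^2 + (6)*y*W^3 + (4)*y*W^4 + (-2)*y*W^5 + (-2)*y*W^6 + (-2)*y*W^8 + (-4)*y^2*W^2 + (-4)*y^2*W^3 + (-7)*y^2*W^4 + (-4)*y^2*W^5 + (-3)*y^2*W^6 + (1)*y^2*W^8 + (2)*y^3*W^3 + (4)*y^3*W^6 + (8)*z*W^2 + (6)*z*W^3 + (4)*z*W^4 + (-2)*z*W^5 + (-2)*z*W^6 + (-2)*z*W^8 + (-2)*z*y^2*W^3 + (-4)*z*y^2*W^4 + (-2)*z*y^2*W^5 + (-2)*z*y^2*W^6 + (-2)*z*y^2*W^8 + (1)*z*y^3*W^4 + (1)*z*y^3*W^6 + (1)*z*y^3*W^8 + (4)*z^2*W^2 + (4)*z^2*W^3 + (7)*z^2*W^4 + (4)*z^2*W^5 + (3)*z^2*W^6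 + (-1)*z^2*W^8 + (-2)*z^2*y*W^3 + (-4)*z^2*y*W^4 + (-2)*z^2*y*W^5 + (-2)*z^2*y*W^6 + (-2)*z^2*y*W^8 + (2)*z^3*W^3 + (4)*z^3*W^6 + (-1)*z^3*y*W^4 + (-1)*z^3*y*W^6 + (-1)*z^3*y*W^8 + (-32)*u*W + (-40)*u*W^2 + (-4)*u*W^4 + (4)*u*W^8 + (8)*u*y*W + (16)*u*y*W^2 + (8)*u*y*W^3 + (8)*u*y*W^4 + (8)*u*y*W^6 + (-8)*u*z*W + (-16)*u*z*W^2 + (-8)*u*z*W^3 + (-8)*u*z*W^4 + (-8)*u*z*W^6 + (8)*u*z*y*W^2 + (12)*u*z*y*W^4 + (4)*u*z*y*W^8) * hzy + ((8)*y*W^2 + (-2)*y*W^3 + (-2)*y*W^4 + (2)*y*W^5 + (-2)*y*W^6 + (-4)*y^2*W^2 + (-3)*y^2*W^4 + (-1)*y^2*W^5 + (1)*y^2*W^6 + (-14)*y^3 + (14)*y^3*W + (-4)*y^3*W^3 + (4)*y^3*W^4 + (-4)*y^4*W^3 + (2)*y^5*W^4 + (1)*y^6 + (-1)*y^6*W +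 (1)*y^6*W^3 + (-1)*y^6*W^4 + (8)*z*W^2 + (-2)*z*W^3 + (-2)*z*W^4 + (2)*z*W^5 + (-2)*z*W^6 + (4)*z^2*W^2 + (3)*z^2*W^4 + (1)*z^2*W^5 + (-1)*z^2*W^6 + (-14)*z^3 + (14)*z^3*W + (-4)*z^3*W^3 + (4)*z^3*W^4 + (4)*z^4*W^3 + (2)*z^5*W^4 + (-1)*z^6 + (1)*z^6*W + (-1)*z^6*W^3 + (1)*z^6*W^4 + (-36)*u + (4)*u*W + (-8)*u*W^2 + (4)*u*W^3 + (-4)*u*W^5 + (4)*u*W^6 + (8)*u*y*W + (8)*u*y*W^2 + (-8)*u*y*W^3 + (8)*u*y*W^4 + (-16)*u*y^2*W + (24)*u*y^3 + (-16)*u*y^3*W + (8)*u*y^3*W^2 + (8)*u*y^3*W^3 + (-4)*u*y^4*W^2 + (4)*u*y^4*W^3 + (-4)*u*y^4*W^4 + (-8)*u*z*W + (-8)*u*z*W^2 + (8)*u*z*W^3 + (-8)*u*z*W^4 + (-16)*u*z^2*W + (-24)*u*z^3 + (16)*u*z^3*W + (-8)*u*z^3*W^2 + (-8)*u*z^3*W^3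 + (-4)*u*z^4*W^2 + (4)*u*z^4*W^3 + (-4)*u*z^4*W^4 + (32)*u^2*y + (-16)*u^2*y^2 + (16)*u^2*y^2*W + (-16)*u^2*y^2*W^2 + (32)*u^2*z + (16)*u^2*z^2 + (-16)*u^2*z^2*W + (16)*u^2*z^2*W^2) * hW

lemma Zfig8_exp (j : ℕ) (h : ℝ) :
    Zfig8 j h =
      (Complex.exp ((((2 * h + 2 * π * ((j : ℝ) - 1)) / 3 : ℝ) : ℂ) * I) +
          Complex.exp (-(((2 * h + 2 * π * ((j : ℝ) - 1)) / 3 : ℝ) : ℂ) * I)) / 2 +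
        (Complex.exp ((((2 * h + 2 * π * ((j : ℝ) - 1)) / 3 : ℝ) : ℂ) * I) ^ 2 -
          Complex.exp (-(((2 * h + 2 * π * ((j : ℝ) - 1)) / 3 : ℝ) : ℂ) * I) ^ 2) / 4 := by
  set A : ℝ := 2 * h + 2 * π * ((j : ℝ) - 1) with hA
  rw [Zfig8, Complex.ofReal_cos, Complex.ofReal_sin]
  simp only [Complex.cos, Complex.sin]
  have h1 : ((2 * A / 3 : ℝ) : ℂ) * I = ((A / 3 : ℝ) : ℂ) * I + ((A / 3 : ℝ) : ℂ) * I := by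
    push_cast; ring
  have h2 : -((2 * A / 3 : ℝ) : ℂ) * I = -((A / 3 : ℝ) : ℂ) * I + -((A / 3 : ℝ) : ℂ) * I := by
    push_cast; ring
  rw [h1, h2, Complex.exp_add, Complex.exp_add]
  linear_combination (Complex.exp (-((A / 3 : ℝ) : ℂ) * I) ^ 2 -
    Complex.exp (((A / 3 : ℝ) : ℂ) * I) ^ 2) / 4 * Complex.I_sq

lemma hW_root : (Complex.exp ((((2 * π / 3 : ℝ)) : ℂ) * I)) ^ 2 +
    Complex.exp ((((2 * π / 3 : ℝ)) : ℂ) * I) + 1 = 0 := by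
  set W := Complex.exp ((((2 * π / 3 : ℝ)) : ℂ) * I) with hWdef
  have h3 : W ^ 3 = 1 := by
    rw [hWdef, ← Complex.exp_nat_mul]
    rw [show ((3 : ℕ) : ℂ) * ((((2 * π / 3 : ℝ)) : ℂ) * I) = 2 * π * I by push_cast; ring]
    exact Complex.exp_two_pi_mul_I
  have hne : W ≠ 1 := by
    rw [hWdef]
    intro hc
    rw [Complex.exp_eq_one_iff] at hc
    obtain ⟨n, hn⟩ := hc
    have him : (2 * π / 3 : ℝ) = n * (2 * π) := by
      have := congrArg Complex.im hn
      simpa using this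
    have h2 : (2 * π) * (3 * (n : ℝ) - 1) = 0 := by linear_combination (-3) * him
    rcases mul_eq_zero.mp h2 with hc' | hc'
    · exact Real.two_pi_pos.ne' hc'
    · have : (3 * n : ℝ) = 1 := by linarith
      have : (3 * n : ℤ) = 1 := by exact_mod_cast this
      omega
  have hne' := sub_ne_zero.mpr hne
  have hfac : (W - 1) * (W ^ 2 + W + 1) = 0 := by linear_combination h3
  rcases mul_eq_zero.mp hfac with hc | hc
  · exact absurd hc hne'
  · exact hc

lemma factorFig8 (h : ℝ) (u : ℂ) :
    fFig8 u (Complex.exp ((h : ℂ) * I)) (Complex.exp (-(h : ℂ) * I)) =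
      64 * (u - Zfig8 1 h) * (u - Zfig8 2 h) * (u - Zfig8 3 h) := by
  set W := Complex.exp ((((2 * π / 3 : ℝ)) : ℂ) * I) with hWdef
  set a1 : ℝ := (2 * h + 2 * π * (((1 : ℕ) : ℝ) - 1)) / 3 with ha1
  set a2 : ℝ := (2 * h + 2 * π * (((2 : ℕ) : ℝ) - 1)) / 3 with ha2
  set a3 : ℝ := (2 * h + 2 * π * (((3 : ℕ) : ℝ) - 1)) / 3 with ha3
  set z := Complex.exp ((a1 : ℂ) * I) with hz
  set y := Complex.exp (-(a1 : ℂ) * I) with hy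
  have hzy : z * y = 1 := by
    rw [hz, hy, ← Complex.exp_add]
    norm_num [Complex.exp_zero]
  have hW := hW_root
  rw [← hWdef] at hW
  have hW3 : W ^ 3 = 1 := by linear_combination (W - 1) * hW
  have hE2 : Complex.exp ((a2 : ℂ) * I) = z * W := by
    rw [hz, hWdef, ← Complex.exp_add]; congr 1; push_cast [ha1, ha2]; ring
  have hF2 : Complex.exp (-(a2 : ℂ) * I) = y * W ^ 2 := by
    have hprod : Complex.exp ((a2 : ℂ) * I) * Complex.exp (-(a2 : ℂ) * I) = 1 := by
      rw [← Complex.exp_add]; norm_num [Complex.exp_zero]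
    have hprod2 : Complex.exp ((a2 : ℂ) * I) * (y * W ^ 2) = 1 := by
      rw [hE2]
      calc z * W * (y * W ^ 2) = z * y * W ^ 3 := by ring
        _ = 1 := by rw [hzy, hW3, one_mul]
    have hne : Complex.exp ((a2 : ℂ) * I) ≠ 0 := Complex.exp_ne_zero _
    exact mul_left_cancel₀ hne (hprod.trans hprod2.symm)
  have hE3 : Complex.exp ((a3 : ℂ) * I) = z * W ^ 2 := by
    rw [hz, hWdef, sq, ← Complex.exp_add, ← Complex.exp_add]; congr 1; push_cast [ha1, ha3]; ring
  have hF3 : Complex.exp (-(a3 : ℂ) * I) = y * W := by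
    have hprod : Complex.exp ((a3 : ℂ) * I) * Complex.exp (-(a3 : ℂ) * I) = 1 := by
      rw [← Complex.exp_add]; norm_num [Complex.exp_zero]
    have hprod2 : Complex.exp ((a3 : ℂ) * I) * (y * W) = 1 := by
      rw [hE3]
      calc z * W ^ 2 * (y * W) = z * y * W ^ 3 := by ring
        _ = 1 := by rw [hzy, hW3, one_mul]
    have hne : Complex.exp ((a3 : ℂ) * I) ≠ 0 := Complex.exp_ne_zero _
    exact mul_left_cancel₀ hne (hprod.trans hprod2.symm)
  have hv2 : Complex.exp ((h : ℂ) * I) ^ 2 = z ^ 3 := by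
    rw [hz, ← Complex.exp_nat_mul, ← Complex.exp_nat_mul]; congr 1; push_cast [ha1]; ring
  have hw2 : Complex.exp (-(h : ℂ) * I) ^ 2 = y ^ 3 := by
    rw [hy, ← Complex.exp_nat_mul, ← Complex.exp_nat_mul]; congr 1; push_cast [ha1]; ring
  rw [Zfig8_exp 1 h, Zfig8_exp 2 h, Zfig8_exp 3 h, ← ha1, ← ha2, ← ha3, ← hz, ← hy,
    hE2, hF2, hE3, hF3]
  rw [fFig8]
  rw [show Complex.exp ((h : ℂ) * I) ^ 4 = (Complex.exp ((h : ℂ) * I) ^ 2) ^ 2 by ring,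
    show Complex.exp (-(h : ℂ) * I) ^ 4 = (Complex.exp (-(h : ℂ) * I) ^ 2) ^ 2 by ring,
    hv2, hw2]
  have hkey := keyFig8 u z y W hzy hW
  linear_combination hkey

/-- The zero set of the figure-8 semiholomorphic polynomial on `ℂ × S¹` is exactly the
parametrized braid whose closure is the figure-8 knot. -/
theorem figure_eight_zero_set :
    {z : ℂ × ℂ | ‖z.2‖ = 1 ∧ fFig8 z.1 z.2 (starRingEnd ℂ z.2) = 0} =
      {z : ℂ × ℂ | ∃ j ∈ Finset.Icc (1 : ℕ) 3, ∃ h : ℝ,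
        z = (Zfig8 j h, Complex.exp (Complex.I * h))} := by
  ext ⟨u, v⟩
  simp only [Set.mem_setOf_eq, Finset.mem_Icc]
  constructor
  · rintro ⟨habs, hf⟩
    obtain ⟨t, ht⟩ := (Complex.norm_eq_one_iff v).mp habs
    have hv' : v = Complex.exp (Complex.I * (t : ℂ)) := by
      rw [← ht, mul_comm ((t : ℂ)) I]
    have hconj : (starRingEnd ℂ) v = Complex.exp (-(t : ℂ) * I) := by
      rw [← ht, ← Complex.exp_conj]
      congr 1
      simp [Complex.conj_ofReal]
    rw [hconj, ← ht, factorFig8 t u] at hf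
    have h64 : (64 : ℂ) ≠ 0 := by norm_num
    rcases mul_eq_zero.mp hf with hc | hc
    · rcases mul_eq_zero.mp hc with hc' | hc'
      · rcases mul_eq_zero.mp hc' with hc'' | hc''
        · exact absurd hc'' h64
        · refine ⟨1, by norm_num, t, ?_⟩
          rw [sub_eq_zero] at hc''
          rw [hc'', hv']
      · refine ⟨2, by norm_num, t, ?_⟩
        rw [sub_eq_zero] at hc'
        rw [hc', hv']
    · refine ⟨3, by norm_num, t, ?_⟩
      rw [sub_eq_zero] at hc
      rw [hc, hv']
  · rintro ⟨j, hj, t, hzeq⟩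
    rw [Prod.ext_iff] at hzeq
    obtain ⟨hu, hv⟩ := hzeq
    simp only at hu hv
    subst hu; subst hv
    constructor
    · simp [Complex.norm_exp]
    · have hconj : (starRingEnd ℂ) (Complex.exp (Complex.I * (t : ℂ))) =
          Complex.exp (-(t : ℂ) * I) := by
        rw [← Complex.exp_conj]
        congr 1
        simp [Complex.conj_ofReal]
        ring
      have hvAlt : Complex.exp (Complex.I * (t : ℂ)) = Complex.exp ((t : ℂ) * I) := by
        rw [mul_comm]
      rw [hconj, hvAlt, factorFig8 t (Zfig8 j t)]
      obtain ⟨hj1, hj3⟩ := hj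
      interval_cases j
      · rw [sub_self]; ring
      · rw [sub_self]; ring
      · rw [sub_self]; ring
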